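/- arXiv:2605.13401 — 9 statements merged into one kernel-verified Lean document; each statement's English description precedes it below -/
import Mathlib

section
/- Let γ ∈ (0,1), s_W ∈ ℝ^m, and let s_0, s_1, …, s_n ∈ ℝ^m be a distance-improving sequence, i.e. ‖s_{k+1} − s_W‖ < ‖s_k − s_W‖ for all 0 ≤ k < n. For each index i define G_i := −∑_{k=i+1}^{n} γ^{k−i−1}·‖s_k − s_W‖. Then for all indices i < j ≤ n one has γ·G_j − G_i ≥ ‖s_j − s_W‖. -/
/-- For a distance-improving sequence `s 0, …, s n` with returns
`G i = -∑_{k=i+1}^{n} γ^{k-i-1} ‖s k - s_W‖`, one has `γ G j - G i ≥ ‖s j - s_W‖`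
for all `i < j ≤ n`. -/
theorem stmt_1 (m n : ℕ) (γ : ℝ) (hγ0 : 0 < γ) (hγ1 : γ < 1)
    (sW : EuclideanSpace ℝ (Fin m)) (s : ℕ → EuclideanSpace ℝ (Fin m))
    (himp : ∀ k < n, ‖s (k + 1) - sW‖ < ‖s k - sW‖)
    (G : ℕ → ℝ)
    (hG : ∀ i, G i = -∑ k ∈ Finset.range (n - i), γ ^ k * ‖s (i + 1 + k) - sW‖) :
    ∀ i j : ℕ, i < j → j ≤ n → γ * G j - G i ≥ ‖s j - sW‖ := by
  set d : ℕ → ℝ := fun t => ‖s t - sW‖ with hdd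
  have hG' : ∀ i, G i = -∑ k ∈ Finset.range (n - i), γ ^ k * d (i + 1 + k) := hG
  have himp' : ∀ k < n, d (k + 1) < d k := himp
  have hd0 : ∀ t, 0 ≤ d t := fun t => norm_nonneg _
  -- d is antitone up to n
  have hmono : ∀ a b, a ≤ b → b ≤ n → d b ≤ d a := by
    intro a b hab hbn
    induction b, hab using Nat.le_induction with
    | base => exact le_refl _
    | succ b hab ih =>
      have h1 : d (b + 1) < d b := himp' b (by omega)
      have h2 : d b ≤ d a := ih (by omega)
      linarith
  -- recurrence
  have hrec : ∀ i < n, G i = γ * G (i + 1) - d (i + 1) := by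
    intro i hi
    have h1 : n - i = (n - (i + 1)) + 1 := by omega
    rw [hG' i, hG' (i + 1), h1, Finset.sum_range_succ']
    have h2 : ∀ k, γ ^ (k + 1) * d (i + 1 + (k + 1)) = γ * (γ ^ k * d (i + 1 + 1 + k)) := by
      intro k
      have : i + 1 + (k + 1) = i + 1 + 1 + k := by omega
      rw [this]; ring
    rw [Finset.sum_congr rfl (fun k _ => h2 k), ← Finset.mul_sum]
    simp only [pow_zero, one_mul, Nat.add_zero]
    ring
  -- geometric bound
  have hbound : ∀ t, t ≤ n → (1 - γ) * (-G t) ≤ d t := by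
    intro t ht
    rw [hG' t, neg_neg]
    have hterm : ∀ k ∈ Finset.range (n - t), γ ^ k * d (t + 1 + k) ≤ γ ^ k * d t := by
      intro k hk
      simp only [Finset.mem_range] at hk
      exact mul_le_mul_of_nonneg_left (hmono t (t + 1 + k) (by omega) (by omega))
        (pow_nonneg hγ0.le k)
    have h1 : ∑ k ∈ Finset.range (n - t), γ ^ k * d (t + 1 + k)
        ≤ ∑ k ∈ Finset.range (n - t), γ ^ k * d t := Finset.sum_le_sum hterm
    have h2 : ∑ k ∈ Finset.range (n - t), γ ^ k * d t
        = (∑ k ∈ Finset.range (n - t), γ ^ k) * d t := by rw [Finset.sum_mul]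
    have h3 := geom_sum_mul γ (n - t)
    have h4 : (0:ℝ) ≤ γ ^ (n - t) := pow_nonneg hγ0.le _
    have h5 : (1 - γ) * ∑ k ∈ Finset.range (n - t), γ ^ k = 1 - γ ^ (n - t) := by
      nlinarith [h3]
    have h6 : (1 - γ) * ∑ k ∈ Finset.range (n - t), γ ^ k * d (t + 1 + k)
        ≤ (1 - γ) * ∑ k ∈ Finset.range (n - t), γ ^ k * d t :=
      mul_le_mul_of_nonneg_left h1 (by linarith)
    have h7 : (1 - γ^(n - t)) * d t ≤ d t := by nlinarith [hd0 t]
    calc (1 - γ) * ∑ k ∈ Finset.range (n - t), γ ^ k * d (t + 1 + k)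
        ≤ (1 - γ) * ∑ k ∈ Finset.range (n - t), γ ^ k * d t := h6
      _ = (1 - γ ^ (n - t)) * d t := by rw [h2, ← mul_assoc, h5]
      _ ≤ d t := h7
  -- G is monotone
  have hmonoG : ∀ i < n, G i ≤ G (i + 1) := by
    intro i hi
    have h1 := hrec i hi
    have h2 := hbound (i + 1) (by omega)
    linarith
  have key : ∀ k i, i + k + 1 ≤ n → γ * G (i + k + 1) - G i ≥ d (i + k + 1) := by
    intro k
    induction k with
    | zero =>
      intro i h
      have := hrec i (by omega)
      simp only [Nat.add_zero] at *
      linarith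
    | succ k ih =>
      intro i h
      have h1 := ih (i + 1) (by omega)
      have h2 := hmonoG i (by omega)
      have he : i + 1 + k + 1 = i + (k + 1) + 1 := by omega
      rw [he] at h1
      linarith
  intro i j hij hjn
  have hj : j = i + (j - i - 1) + 1 := by omega
  rw [hj]
  exact key _ i (by omega)
end

section
/- Let γ ∈ (0,1), s_W ∈ ℝ^m, W ∈ ℝ^{m×d} a matrix, and consider linear dynamics f(s, a) = s + W·a. Let s_0, …, s_n ∈ ℝ^m be a distance-improving sequence (‖s_{k+1} − s_W‖ < ‖s_k − s_W‖ for all k < n) generated by actions a_0, …, a_{n−1} ∈ ℝ^d via s_{k+1} = s_k + W·a_k, and let G_i := −∑_{k=i+1}^{n} γ^{k−i−1}·‖s_k − s_W‖. Then for any indices i < j ≤ n, the accumulated action a := ∑_{k=i}^{j−1} a_k satisfies f(s_i, a) = s_j and is a shortcut at s_i, i.e. γ·G_j − G_i ≥ ‖f(s_i, a) − s_W‖. -/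
/-- For linear dynamics `f(s, a) = s + W a` and a distance-improving trajectory
generated by actions `a_k`, the accumulated action `a = ∑_{k=i}^{j-1} a_k` satisfies
`f(s_i, a) = s_j` and is a shortcut at `s_i`: `γ G_j - G_i ≥ ‖f(s_i, a) - s_W‖`. -/
theorem stmt_2 (m d n : ℕ) (γ : ℝ) (hγ0 : 0 < γ) (hγ1 : γ < 1)
    (sW : EuclideanSpace ℝ (Fin m))
    (W : EuclideanSpace ℝ (Fin d) →L[ℝ] EuclideanSpace ℝ (Fin m))
    (s : ℕ → EuclideanSpace ℝ (Fin m)) (a : ℕ → EuclideanSpace ℝ (Fin d))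
    (hdyn : ∀ k < n, s (k + 1) = s k + W (a k))
    (himp : ∀ k < n, ‖s (k + 1) - sW‖ < ‖s k - sW‖)
    (G : ℕ → ℝ)
    (hG : ∀ i, G i = -∑ k ∈ Finset.range (n - i), γ ^ k * ‖s (i + 1 + k) - sW‖) :
    ∀ i j : ℕ, i < j → j ≤ n →
      s i + W (∑ k ∈ Finset.Ico i j, a k) = s j ∧
      γ * G j - G i ≥ ‖(s i + W (∑ k ∈ Finset.Ico i j, a k)) - sW‖ := by
  -- monotonicity of distances
  have hmono : ∀ k l : ℕ, k ≤ l → l ≤ n → ‖s l - sW‖ ≤ ‖s k - sW‖ := by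
    intro k l hkl
    induction l, hkl using Nat.le_induction with
    | base => intro _; exact le_refl _
    | succ l hkl ih =>
      intro hln
      exact le_trans (le_of_lt (himp l (by omega))) (ih (by omega))
  intro i j hij hjn
  -- part 1
  have hpart1 : s i + W (∑ k ∈ Finset.Ico i j, a k) = s j := by
    have key : ∀ l : ℕ, i ≤ l → l ≤ n → s i + W (∑ k ∈ Finset.Ico i l, a k) = s l := by
      intro l hil hln
      induction l, hil using Nat.le_induction with
      | base => simp
      | succ l hil ih =>
        have hln' : l ≤ n := by omega
        rw [Finset.sum_Ico_succ_top hil, map_add, ← add_assoc, ih hln',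
          hdyn l (by omega)]
    exact key j (le_of_lt hij) hjn
  refine ⟨hpart1, ?_⟩
  rw [hpart1]
  set c := ‖s j - sW‖ with hc
  set p := γ ^ (j - i) with hp
  set S := ∑ k ∈ Finset.range (n - j), γ ^ k * ‖s (j + 1 + k) - sW‖ with hS
  set H := ∑ k ∈ Finset.range (j - i), γ ^ k * ‖s (i + 1 + k) - sW‖ with hH
  set A := ∑ k ∈ Finset.range (j - i), γ ^ k with hA
  set B := ∑ k ∈ Finset.range (n - j), γ ^ k with hB
  have hGi : G i = -(H + p * S) := by
    rw [hG i]
    have hsplit : n - i = (j - i) + (n - j) := by omega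
    rw [hsplit, Finset.sum_range_add]
    congr 1
    congr 1
    rw [hS, Finset.mul_sum]
    apply Finset.sum_congr rfl
    intro k hk
    have harg : i + 1 + ((j - i) + k) = j + 1 + k := by omega
    rw [harg, pow_add]
    ring
  have hGj : G j = -S := by rw [hG j]
  have hc0 : 0 ≤ c := norm_nonneg _
  have hHge : A * c ≤ H := by
    rw [hA, Finset.sum_mul]
    apply Finset.sum_le_sum
    intro k hk
    have hk' : k < j - i := Finset.mem_range.mp hk
    have := hmono (i + 1 + k) j (by omega) hjn
    have hγk : (0:ℝ) ≤ γ ^ k := by positivity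
    nlinarith [this]
  have hSle : S ≤ B * c := by
    rw [hB, Finset.sum_mul]
    apply Finset.sum_le_sum
    intro k hk
    have hk' : k < n - j := Finset.mem_range.mp hk
    have := hmono j (j + 1 + k) (by omega) (by omega)
    have hγk : (0:ℝ) ≤ γ ^ k := by positivity
    nlinarith [this]
  have hS0 : 0 ≤ S := by
    apply Finset.sum_nonneg
    intro k hk
    positivity
  have hAeq : (1 - γ) * A = 1 - p := by
    have := geom_sum_mul γ (j - i)
    rw [hA, hp]; nlinarith [this]
  have hBle : (1 - γ) * B ≤ 1 := by
    have := geom_sum_mul γ (n - j)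
    have hγnj : (0:ℝ) ≤ γ ^ (n - j) := by positivity
    rw [hB]; nlinarith [this]
  have hpγ : p ≤ γ := by
    rw [hp]
    calc γ ^ (j - i) ≤ γ ^ 1 := by
          apply pow_le_pow_of_le_one (le_of_lt hγ0) (le_of_lt hγ1) (by omega)
      _ = γ := pow_one γ
  have hγ1' : (0:ℝ) < 1 - γ := by linarith
  have hB0 : 0 ≤ B := by
    apply Finset.sum_nonneg
    intro k hk
    positivity
  rw [hGi, hGj]
  have key : H + p * S - γ * S ≥ c := by
    nlinarith [mul_le_mul_of_nonneg_left hSle (by linarith : (0:ℝ) ≤ γ - p),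
      mul_le_mul_of_nonneg_right hBle hc0, mul_nonneg (by linarith : (0:ℝ) ≤ γ - p) hc0]
  linarith
end

section
/- Let g : ℝ^m → ℝ^{m×d} be a matrix-valued function whose operator norm is bounded, say ‖g(s)‖ ≤ M for all s ∈ ℝ^m, and define f(s, a) := s + g(s)·a. Then f has linear placement errors with constant 2M: for every s_0 ∈ ℝ^m and every action chain a_0, …, a_{k−1} ∈ ℝ^d generating states s_{i+1} := f(s_i, a_i), one has ‖f(s_0, ∑_{i=0}^{k−1} a_i) − s_k‖ ≤ 2M·∑_{i=0}^{k−1} ‖a_i‖. -/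
/-- If `f(s, a) = s + g(s) a` with `‖g(s)‖ ≤ M` (operator norm) for all `s`,
then `f` has linear placement errors with constant `2 M`. -/
theorem stmt_3 (m d : ℕ)
    (g : EuclideanSpace ℝ (Fin m) → (EuclideanSpace ℝ (Fin d) →L[ℝ] EuclideanSpace ℝ (Fin m)))
    (M : ℝ) (hM : ∀ s, ‖g s‖ ≤ M)
    (k : ℕ) (a : ℕ → EuclideanSpace ℝ (Fin d)) (s : ℕ → EuclideanSpace ℝ (Fin m))
    (hchain : ∀ i < k, s (i + 1) = s i + g (s i) (a i)) :
    ‖s 0 + g (s 0) (∑ i ∈ Finset.range k, a i) - s k‖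
      ≤ 2 * M * ∑ i ∈ Finset.range k, ‖a i‖ := by
  have hsk : ∀ n ≤ k, s n = s 0 + ∑ i ∈ Finset.range n, g (s i) (a i) := by
    intro n hn
    induction n with
    | zero => simp
    | succ n ih =>
      rw [Finset.sum_range_succ, hchain n (by omega), ih (by omega)]
      abel
  rw [hsk k le_rfl, map_sum]
  have : s 0 + (∑ i ∈ Finset.range k, g (s 0) (a i)) -
      (s 0 + ∑ i ∈ Finset.range k, g (s i) (a i))
      = ∑ i ∈ Finset.range k, (g (s 0) (a i) - g (s i) (a i)) := by
    rw [Finset.sum_sub_distrib]; abel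
  rw [this, Finset.mul_sum]
  refine (norm_sum_le _ _).trans (Finset.sum_le_sum fun i _ => ?_)
  have h1 : ‖g (s 0) (a i)‖ ≤ M * ‖a i‖ :=
    le_trans ((g (s 0)).le_opNorm _) (by
      exact mul_le_mul_of_nonneg_right (hM _) (norm_nonneg _))
  have h2 : ‖g (s i) (a i)‖ ≤ M * ‖a i‖ :=
    le_trans ((g (s i)).le_opNorm _) (by
      exact mul_le_mul_of_nonneg_right (hM _) (norm_nonneg _))
  calc ‖g (s 0) (a i) - g (s i) (a i)‖ ≤ ‖g (s 0) (a i)‖ + ‖g (s i) (a i)‖ :=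
        norm_sub_le _ _
    _ ≤ M * ‖a i‖ + M * ‖a i‖ := add_le_add h1 h2
    _ = 2 * M * ‖a i‖ := by ring
end

section
/- Let f : ℝ^m × ℝ^d → ℝ^m with f(s, 0) = s, and suppose there exists a constant L ≥ 0 such that for all s ∈ ℝ^m and all a, a' ∈ ℝ^d, ‖f(s, a + a') − f(f(s, a), a')‖ ≤ L·‖a‖. Then f has linear placement errors with constant L: for every s_0 ∈ ℝ^m and every action chain a_0, …, a_{k−1} generating states s_{i+1} := f(s_i, a_i), one has ‖f(s_0, ∑_{i=0}^{k−1} a_i) − s_k‖ ≤ L·∑_{i=0}^{k−1} ‖a_i‖. -/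
/-- If `f(s, 0) = s` and the one-step regrouping bound
`‖f(s, a + a') - f(f(s, a), a')‖ ≤ L ‖a‖` holds for all `s, a, a'`, then `f` has
linear placement errors with constant `L`. -/
theorem stmt_7 (m d : ℕ)
    (f : EuclideanSpace ℝ (Fin m) → EuclideanSpace ℝ (Fin d) → EuclideanSpace ℝ (Fin m))
    (hf0 : ∀ s, f s 0 = s)
    (L : ℝ) (hL : 0 ≤ L)
    (hreg : ∀ s a a', ‖f s (a + a') - f (f s a) a'‖ ≤ L * ‖a‖)
    (k : ℕ) (a : ℕ → EuclideanSpace ℝ (Fin d)) (s : ℕ → EuclideanSpace ℝ (Fin m))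
    (hchain : ∀ i < k, s (i + 1) = f (s i) (a i)) :
    ‖f (s 0) (∑ i ∈ Finset.range k, a i) - s k‖ ≤ L * ∑ i ∈ Finset.range k, ‖a i‖ := by
  induction k generalizing a s with
  | zero => simp [hf0]
  | succ k ih =>
    rw [Finset.sum_range_succ', Finset.sum_range_succ']
    have h1 := ih (fun i => a (i + 1)) (fun i => s (i + 1))
      (fun i hi => hchain (i + 1) (by omega))
    have h2 := hreg (s 0) (a 0) (∑ i ∈ Finset.range k, a (i + 1))
    calc ‖f (s 0) (∑ i ∈ Finset.range k, a (i + 1) + a 0) - s (k + 1)‖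
        ≤ ‖f (s 0) (a 0 + ∑ i ∈ Finset.range k, a (i + 1))
            - f (f (s 0) (a 0)) (∑ i ∈ Finset.range k, a (i + 1))‖
          + ‖f (f (s 0) (a 0)) (∑ i ∈ Finset.range k, a (i + 1)) - s (k + 1)‖ := by
          rw [add_comm]
          exact norm_sub_le_norm_sub_add_norm_sub _ _ _
      _ ≤ L * ‖a 0‖ + L * ∑ i ∈ Finset.range k, ‖a (i + 1)‖ := by
          apply add_le_add h2
          rw [← hchain 0 (by omega)]
          exact h1
      _ = L * (∑ i ∈ Finset.range k, ‖a (i + 1)‖ + ‖a 0‖) := by ring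
end

section
/- On ℝ, define f(s, a) := s + sign(s)·a, where sign(s) = 1 if s > 0, sign(s) = −1 if s < 0, and sign(0) = 0. Then: (i) f has linear placement errors with constant 2, i.e. for every s_0 ∈ ℝ and every action chain a_0, …, a_{k−1} ∈ ℝ generating states s_{i+1} := f(s_i, a_i), one has |f(s_0, ∑_{i<k} a_i) − s_k| ≤ 2·∑_{i<k} |a_i|; but (ii) there is no constant L ≥ 0 such that |f(s, a + a') − f(f(s, a), a')| ≤ L·|a| for all s, a, a' ∈ ℝ. -/
/-- The distortion `f(s, a) = s + sign(s) · a` on `ℝ`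
(`Real.sign s` is `1` for `s > 0`, `-1` for `s < 0`, and `0` for `s = 0`). -/
noncomputable def fSign (s a : ℝ) : ℝ := s + Real.sign s * a

lemma fSign_dist (s a : ℝ) : |fSign s a - s| ≤ |a| := by
  have h : |Real.sign s| ≤ 1 := by
    rcases lt_trichotomy s 0 with h | h | h
    · simp [Real.sign_of_neg h]
    · simp [h]
    · simp [Real.sign_of_pos h]
  calc |fSign s a - s| = |Real.sign s| * |a| := by
        simp [fSign, abs_mul]
    _ ≤ 1 * |a| := by gcongr
    _ = |a| := one_mul _

/-- `f(s, a) = s + sign(s) a` has linear placement errors with constant `2`,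
but satisfies no one-step regrouping bound `|f(s, a + a') - f(f(s, a), a')| ≤ L |a|`. -/
theorem stmt_8 :
    (∀ (k : ℕ) (a s : ℕ → ℝ),
      (∀ i < k, s (i + 1) = fSign (s i) (a i)) →
      |fSign (s 0) (∑ i ∈ Finset.range k, a i) - s k| ≤ 2 * ∑ i ∈ Finset.range k, |a i|)
    ∧ ¬∃ L : ℝ, 0 ≤ L ∧
        ∀ s a a' : ℝ, |fSign s (a + a') - fSign (fSign s a) a'| ≤ L * |a| := by
  constructor
  · intro k a s hs
    have hwalk : ∀ m, m ≤ k → |s m - s 0| ≤ ∑ i ∈ Finset.range m, |a i| := by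
      intro m
      induction m with
      | zero => simp
      | succ n ih =>
        intro hn
        have hle : n ≤ k := Nat.le_of_succ_le hn
        calc |s (n + 1) - s 0| ≤ |s (n + 1) - s n| + |s n - s 0| :=
              abs_sub_le _ _ _
          _ ≤ |a n| + ∑ i ∈ Finset.range n, |a i| := by
              have := fSign_dist (s n) (a n)
              rw [← hs n (Nat.lt_of_succ_le hn)] at this
              exact add_le_add this (ih hle)
          _ = ∑ i ∈ Finset.range (n + 1), |a i| := by
              rw [Finset.sum_range_succ]; ring
    calc |fSign (s 0) (∑ i ∈ Finset.range k, a i) - s k|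
        ≤ |fSign (s 0) (∑ i ∈ Finset.range k, a i) - s 0| + |s 0 - s k| :=
          abs_sub_le _ _ _
      _ ≤ |∑ i ∈ Finset.range k, a i| + ∑ i ∈ Finset.range k, |a i| := by
          refine add_le_add (fSign_dist _ _) ?_
          rw [abs_sub_comm]; exact hwalk k le_rfl
      _ ≤ ∑ i ∈ Finset.range k, |a i| + ∑ i ∈ Finset.range k, |a i| :=
          add_le_add_left (Finset.abs_sum_le_sum_abs _ _) _
      _ = 2 * ∑ i ∈ Finset.range k, |a i| := by ring
  · rintro ⟨L, hL, h⟩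
    have h1 := h 1 (-1) (L + 2)
    have e1 : fSign 1 (-1) = 0 := by
      simp [fSign, Real.sign_of_pos (by norm_num : (0:ℝ) < 1)]
    have e2 : fSign 1 (-1 + (L + 2)) = L + 2 := by
      simp [fSign, Real.sign_of_pos (by norm_num : (0:ℝ) < 1)]
    rw [e1, e2] at h1
    simp only [fSign, Real.sign_zero, zero_mul, add_zero, sub_zero, zero_add] at h1
    rw [abs_of_nonneg (by linarith), abs_neg, abs_one, mul_one] at h1
    linarith
end

section
/- Fix s_W ∈ ℝ^m and constants 0 < C < λ, and on ℝ^m with actions in ℝ^m define f(s, a) := s + clip_{C,λ}(‖s − s_W‖)·a, where clip_{C,λ}(x) := min(max(x, C), λ). Then f has linear placement errors with constant 2λ: for every s_0 ∈ ℝ^m and every action chain a_0, …, a_{k−1} generating states s_{i+1} := f(s_i, a_i), one has ‖f(s_0, ∑_{i<k} a_i) − s_k‖ ≤ 2λ·∑_{i<k} ‖a_i‖. -/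
/-- The scaling distortion `f(s, a) = s + clip_{C,λ}(‖s - s_W‖) · a`
with `clip_{C,λ}(x) = min (max x C) λ` and `0 < C < λ` has linear placement errors
with constant `2 λ`. -/
theorem stmt_9 (m : ℕ) (sW : EuclideanSpace ℝ (Fin m)) (C lam : ℝ)
    (hC : 0 < C) (hClam : C < lam)
    (f : EuclideanSpace ℝ (Fin m) → EuclideanSpace ℝ (Fin m) → EuclideanSpace ℝ (Fin m))
    (hf : ∀ s a, f s a = s + (min (max ‖s - sW‖ C) lam) • a)
    (k : ℕ) (a s : ℕ → EuclideanSpace ℝ (Fin m))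
    (hchain : ∀ i < k, s (i + 1) = f (s i) (a i)) :
    ‖f (s 0) (∑ i ∈ Finset.range k, a i) - s k‖
      ≤ 2 * lam * ∑ i ∈ Finset.range k, ‖a i‖ := by
  set c : EuclideanSpace ℝ (Fin m) → ℝ := fun t => min (max ‖t - sW‖ C) lam with hc
  have hcb : ∀ t, C ≤ c t ∧ c t ≤ lam := fun t =>
    ⟨le_min (le_max_right _ _) hClam.le, min_le_right _ _⟩
  have hs : ∀ n ≤ k, s n = s 0 + ∑ i ∈ Finset.range n, c (s i) • a i := by
    intro n hn
    induction n with
    | zero => rw [Finset.range_zero, Finset.sum_empty, add_zero]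
    | succ n ih =>
      have hnk : n < k := hn
      rw [hchain n hnk, hf, Finset.sum_range_succ, ih hnk.le]
      rw [add_assoc]
  have hdiff : f (s 0) (∑ i ∈ Finset.range k, a i) - s k
      = ∑ i ∈ Finset.range k, (c (s 0) - c (s i)) • a i := by
    rw [hf, hs k le_rfl, Finset.smul_sum]
    rw [add_sub_add_left_eq_sub, ← Finset.sum_sub_distrib]
    exact Finset.sum_congr rfl fun i _ => (sub_smul _ _ _).symm
  rw [hdiff, Finset.mul_sum]
  refine (norm_sum_le _ _).trans (Finset.sum_le_sum fun i _ => ?_)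
  rw [norm_smul]
  have h0 := hcb (s 0); have hi := hcb (s i)
  have : ‖c (s 0) - c (s i)‖ ≤ 2 * lam := by
    rw [Real.norm_eq_abs, abs_sub_le_iff]
    constructor <;> linarith
  exact mul_le_mul_of_nonneg_right this (norm_nonneg _)
end

section
/- Let g : ℝ^m → ℝ^{m×m} be a function assigning to each state an orthogonal matrix (for instance, a region-dependent rotation as in f_regrot), and define f(s, a) := s + g(s)·a on ℝ^m. Then f has linear placement errors with constant 2: for every s_0 ∈ ℝ^m and every action chain a_0, …, a_{k−1} generating states s_{i+1} := f(s_i, a_i), one has ‖f(s_0, ∑_{i<k} a_i) − s_k‖ ≤ 2·∑_{i<k} ‖a_i‖. -/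
/-- If `g` assigns to each state an orthogonal (norm-preserving linear)
matrix, the distortion `f(s, a) = s + g(s) a` has linear placement errors with
constant `2`. -/
theorem stmt_10 (m : ℕ)
    (g : EuclideanSpace ℝ (Fin m) → (EuclideanSpace ℝ (Fin m) →L[ℝ] EuclideanSpace ℝ (Fin m)))
    (hg : ∀ s x, ‖g s x‖ = ‖x‖)
    (k : ℕ) (a s : ℕ → EuclideanSpace ℝ (Fin m))
    (hchain : ∀ i < k, s (i + 1) = s i + g (s i) (a i)) :
    ‖s 0 + g (s 0) (∑ i ∈ Finset.range k, a i) - s k‖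
      ≤ 2 * ∑ i ∈ Finset.range k, ‖a i‖ := by
  have hsk : s k = s 0 + ∑ i ∈ Finset.range k, g (s i) (a i) := by
    induction k with
    | zero => simp
    | succ n ih =>
      rw [Finset.sum_range_succ, ← add_assoc,
        ← ih (fun i hi => hchain i (hi.trans (Nat.lt_succ_self n)))]
      exact hchain n (Nat.lt_succ_self n)
  rw [hsk]
  have : s 0 + g (s 0) (∑ i ∈ Finset.range k, a i)
      - (s 0 + ∑ i ∈ Finset.range k, g (s i) (a i))
      = g (s 0) (∑ i ∈ Finset.range k, a i) - ∑ i ∈ Finset.range k, g (s i) (a i) := by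
    abel
  rw [this]
  calc ‖g (s 0) (∑ i ∈ Finset.range k, a i) - ∑ i ∈ Finset.range k, g (s i) (a i)‖
      ≤ ‖g (s 0) (∑ i ∈ Finset.range k, a i)‖ + ‖∑ i ∈ Finset.range k, g (s i) (a i)‖ :=
        norm_sub_le _ _
    _ ≤ ‖∑ i ∈ Finset.range k, a i‖ + ∑ i ∈ Finset.range k, ‖g (s i) (a i)‖ := by
        rw [hg]
        gcongr
        exact norm_sum_le _ _
    _ ≤ (∑ i ∈ Finset.range k, ‖a i‖) + ∑ i ∈ Finset.range k, ‖a i‖ := by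
        gcongr with i hi
        · exact norm_sum_le _ _
        · exact le_of_eq (hg _ _)
    _ = 2 * ∑ i ∈ Finset.range k, ‖a i‖ := by ring
end

section
/- On ℝ^d, fix σ ≥ 0 and a scalar w with 0 ≤ w ≤ σ, and define f(s, a) := s + a + w·(sin(s) ⊙ cos(s))·‖a‖, where sin and cos are applied componentwise and ⊙ denotes the componentwise product. Then f has linear placement errors with constant σ·√d: for every s_0 ∈ ℝ^d and every action chain a_0, …, a_{k−1} generating states s_{i+1} := f(s_i, a_i), one has ‖f(s_0, ∑_{i<k} a_i) − s_k‖ ≤ σ·√d·∑_{i<k} ‖a_i‖. -/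
/-- The sinusoidal distortion
`f(s, a) = s + a + w · (sin(s) ⊙ cos(s)) · ‖a‖` on `ℝ^d` with `0 ≤ w ≤ σ`
has linear placement errors with constant `σ √d`. -/
theorem stmt_11 (d : ℕ) (σ w : ℝ) (hσ : 0 ≤ σ) (hw0 : 0 ≤ w) (hwσ : w ≤ σ)
    (f : EuclideanSpace ℝ (Fin d) → EuclideanSpace ℝ (Fin d) → EuclideanSpace ℝ (Fin d))
    (hf : ∀ s a, f s a = s + a +
      (w * ‖a‖) • (WithLp.equiv 2 (Fin d → ℝ)).symm (fun i => Real.sin (s i) * Real.cos (s i)))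
    (k : ℕ) (a s : ℕ → EuclideanSpace ℝ (Fin d))
    (hchain : ∀ i < k, s (i + 1) = f (s i) (a i)) :
    ‖f (s 0) (∑ i ∈ Finset.range k, a i) - s k‖
      ≤ σ * Real.sqrt d * ∑ i ∈ Finset.range k, ‖a i‖ := by
  set g : EuclideanSpace ℝ (Fin d) → EuclideanSpace ℝ (Fin d) :=
    fun x => (WithLp.equiv 2 (Fin d → ℝ)).symm (fun i => Real.sin (x i) * Real.cos (x i)) with hgdef
  have hg : ∀ x, ‖g x‖ ≤ Real.sqrt d / 2 := by
    intro x
    simp only [hgdef]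
    rw [EuclideanSpace.norm_eq]
    simp only [Real.norm_eq_abs, sq_abs]
    have hsum : ∑ i : Fin d, ((WithLp.equiv 2 (Fin d → ℝ)).symm
        (fun i => Real.sin (x i) * Real.cos (x i)) i) ^ 2 ≤ (d : ℝ) / 4 := by
      have : ∀ i : Fin d, (Real.sin (x i) * Real.cos (x i)) ^ 2 ≤ 1 / 4 := by
        intro i
        have h2 : Real.sin (2 * x i) = 2 * (Real.sin (x i) * Real.cos (x i)) := by
          rw [Real.sin_two_mul]; ring
        have h3 : (Real.sin (2 * x i)) ^ 2 ≤ 1 := Real.sin_sq_le_one _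
        have h4 : (Real.sin (2 * x i)) ^ 2
            = 4 * (Real.sin (x i) * Real.cos (x i)) ^ 2 := by rw [h2]; ring
        linarith
      calc ∑ i : Fin d, ((WithLp.equiv 2 (Fin d → ℝ)).symm
            (fun i => Real.sin (x i) * Real.cos (x i)) i) ^ 2
          = ∑ i : Fin d, (Real.sin (x i) * Real.cos (x i)) ^ 2 := rfl
        _ ≤ ∑ _i : Fin d, (1 / 4 : ℝ) := Finset.sum_le_sum (fun i _ => this i)
        _ = (d : ℝ) / 4 := by simp; ring
    calc Real.sqrt (∑ i : Fin d, ((WithLp.equiv 2 (Fin d → ℝ)).symm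
          (fun i => Real.sin (x i) * Real.cos (x i)) i) ^ 2)
        ≤ Real.sqrt ((d : ℝ) / 4) := Real.sqrt_le_sqrt hsum
      _ = Real.sqrt d / 2 := by
          rw [Real.sqrt_div (by positivity : (0:ℝ) ≤ (d:ℝ)),
            show (4:ℝ) = 2 ^ 2 by norm_num, Real.sqrt_sq (by norm_num : (0:ℝ) ≤ 2)]
  have main : ∀ n, n ≤ k → ‖f (s 0) (∑ i ∈ Finset.range n, a i) - s n‖
      ≤ w * Real.sqrt d * ∑ i ∈ Finset.range n, ‖a i‖ := by
    intro n
    induction n with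
    | zero => intro _; simp [hf]
    | succ n ih =>
      intro hn
      have ihn := ih (le_of_lt (Nat.lt_of_succ_le hn))
      have hsn : s (n + 1) = f (s n) (a n) := hchain n (Nat.lt_of_succ_le hn)
      set A := ∑ i ∈ Finset.range n, a i with hA
      have hsum : ∑ i ∈ Finset.range (n+1), a i = A + a n := by
        rw [Finset.sum_range_succ]
      have key : f (s 0) (A + a n) - s (n + 1)
          = (f (s 0) A - s n) + ((w * ‖A + a n‖ - w * ‖A‖) • g (s 0))
            + (-((w * ‖a n‖) • g (s n))) := by
        rw [hsn, hf, hf, hf]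
        simp only [hgdef]
        module
      rw [hsum, key]
      have habs : |‖A + a n‖ - ‖A‖| ≤ ‖a n‖ := by
        simpa using abs_norm_sub_norm_le (A + a n) A
      calc ‖(f (s 0) A - s n) + ((w * ‖A + a n‖ - w * ‖A‖) • g (s 0))
            + (-((w * ‖a n‖) • g (s n)))‖
          ≤ ‖f (s 0) A - s n‖ + ‖(w * ‖A + a n‖ - w * ‖A‖) • g (s 0)‖
            + ‖(w * ‖a n‖) • g (s n)‖ := by
            refine le_trans (norm_add_le _ _) ?_
            gcongr
            · exact norm_add_le _ _
            · rw [norm_neg]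
        _ ≤ w * Real.sqrt d * ∑ i ∈ Finset.range n, ‖a i‖
            + (w * ‖a n‖) * (Real.sqrt d / 2) + (w * ‖a n‖) * (Real.sqrt d / 2) := by
            have hb : ‖(w * ‖A + a n‖ - w * ‖A‖) • g (s 0)‖
                ≤ (w * ‖a n‖) * (Real.sqrt d / 2) := by
              rw [norm_smul]
              have h1 : ‖w * ‖A + a n‖ - w * ‖A‖‖ ≤ w * ‖a n‖ := by
                rw [Real.norm_eq_abs, show w * ‖A + a n‖ - w * ‖A‖ = w * (‖A + a n‖ - ‖A‖) by ring,
                  abs_mul, abs_of_nonneg hw0]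
                exact mul_le_mul_of_nonneg_left habs hw0
              exact mul_le_mul h1 (hg _) (norm_nonneg _) (by positivity)
            have hc : ‖(w * ‖a n‖) • g (s n)‖ ≤ (w * ‖a n‖) * (Real.sqrt d / 2) := by
              rw [norm_smul, Real.norm_eq_abs, abs_of_nonneg (by positivity)]
              exact mul_le_mul_of_nonneg_left (hg _) (by positivity)
            exact add_le_add (add_le_add ihn hb) hc
        _ = w * Real.sqrt d * ∑ i ∈ Finset.range (n+1), ‖a i‖ := by
            rw [Finset.sum_range_succ]; ring
  calc ‖f (s 0) (∑ i ∈ Finset.range k, a i) - s k‖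
      ≤ w * Real.sqrt d * ∑ i ∈ Finset.range k, ‖a i‖ := main k le_rfl
    _ ≤ σ * Real.sqrt d * ∑ i ∈ Finset.range k, ‖a i‖ := by
        gcongr
end

section
/- Let γ ∈ (0,1) and s_W ∈ ℝ^m. Let s_0, …, s_n ∈ ℝ^m be a trajectory with returns G_i := −∑_{k=i+1}^{n} γ^{k−i−1}·‖s_k − s_W‖, let 0 ≤ t ≤ n, and let s' ∈ ℝ^m be a state with a continuation trajectory u_0 = s', u_1, …, u_p ∈ ℝ^m of return V' := −∑_{k=1}^{p} γ^{k−1}·‖u_k − s_W‖. If the shortcut condition γ·V' − ‖s' − s_W‖ ≥ G_t holds, then the return of the augmented trajectory that follows s_0, …, s_t, then moves to s' and follows u_1, …, u_p, namely −∑_{k=1}^{t} γ^{k−1}·‖s_k − s_W‖ − γ^t·‖s' − s_W‖ + γ^{t+1}·V', is at least G_0. -/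
/-- single-augmentation step of policy improvement: if the shortcut
condition `γ V' - ‖s' - s_W‖ ≥ G_t` holds, then the return of the trajectory that
follows `s_0, …, s_t`, jumps to `s' = u_0`, and continues with `u_1, …, u_p`
is at least `G_0`. -/
theorem stmt_14 (m n p t : ℕ) (γ : ℝ) (hγ0 : 0 < γ) (hγ1 : γ < 1)
    (sW : EuclideanSpace ℝ (Fin m))
    (s : ℕ → EuclideanSpace ℝ (Fin m))
    (G : ℕ → ℝ)
    (hG : ∀ i, G i = -∑ k ∈ Finset.range (n - i), γ ^ k * ‖s (i + 1 + k) - sW‖)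
    (ht : t ≤ n)
    (s' : EuclideanSpace ℝ (Fin m)) (u : ℕ → EuclideanSpace ℝ (Fin m))
    (hu0 : u 0 = s')
    (V' : ℝ) (hV' : V' = -∑ k ∈ Finset.range p, γ ^ k * ‖u (k + 1) - sW‖)
    (hshortcut : γ * V' - ‖s' - sW‖ ≥ G t) :
    (-∑ k ∈ Finset.range t, γ ^ k * ‖s (k + 1) - sW‖) - γ ^ t * ‖s' - sW‖
        + γ ^ (t + 1) * V' ≥ G 0 := by
  have hsplit : G 0 = (-∑ k ∈ Finset.range t, γ ^ k * ‖s (k + 1) - sW‖)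
      + γ ^ t * G t := by
    rw [hG 0, hG t]
    have hn : n - 0 = t + (n - t) := by omega
    rw [hn, Finset.sum_range_add, mul_neg, Finset.mul_sum]
    have e1 : ∀ k : ℕ, 0 + 1 + k = k + 1 := fun k => by omega
    have e2 : ∀ k : ℕ, 0 + 1 + (t + k) = t + 1 + k := fun k => by omega
    simp only [e1, e2]
    have e3 : ∀ k : ℕ, t + 1 + k = t + k + 1 := fun k => by omega
    simp only [e3, pow_add, mul_assoc]
    ring
  have hpos : (0:ℝ) ≤ γ ^ t := le_of_lt (pow_pos hγ0 t)
  have key : γ ^ t * G t ≤ γ ^ t * (γ * V' - ‖s' - sW‖) :=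
    mul_le_mul_of_nonneg_left hshortcut hpos
  rw [hsplit]
  have : γ ^ t * (γ * V' - ‖s' - sW‖) = -(γ ^ t * ‖s' - sW‖) + γ ^ (t + 1) * V' := by
    ring
  linarith [key, this ▸ key]
end
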